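/- Let M ≥ 1, N = 2M − 1, ζ = exp(2πi/N), t : ℤ → ℂ, and let T be the M×M Toeplitz matrix with entries T i j = t((i : ℤ) − j). Define c : ZMod N → ℂ by c(s mod N) = t(s) for −(M−1) ≤ s ≤ M−1, and λ_j = Σ_{s ∈ ZMod N} c(s) ζ^{−j·s}. Then for every p : Fin M → ℂ and every i ∈ Fin M, (T.mulVec p)(i) = (1/N) Σ_{j ∈ ZMod N} ζ^{i·j} · λ_j · (Σ_{l=0}^{M−1} ζ^{−j·l} p(l)); i.e., T p = F̃⁻¹ Λ F̃ p, where F̃ consists of the first M columns of the N×N Fourier matrix and F̃⁻¹ of the first M rows of its inverse. -/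

import Mathlib

/-- The Toeplitz matrix-vector product `T p` is computed by the
Fourier-diagonalized circulant embedding:
`T p = F̃⁻¹ Λ F̃ p`, where `F̃` consists of the first `M` columns of the `N×N`
Fourier matrix (`N = 2M − 1`), `F̃⁻¹` of the first `M` rows of its inverse, and
`Λ` is the diagonal of DFT values of the circulant generator `c`. -/
theorem toeplitz_mulVec_fourier_formula (M N : ℕ) (hM : 1 ≤ M)
    (hN : N = 2 * M - 1) [NeZero N] (ζ : ℂ)
    (hζ : ζ = Complex.exp (2 * Real.pi * Complex.I / N))
    (t : ℤ → ℂ)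
    (T : Matrix (Fin M) (Fin M) ℂ)
    (hT : ∀ i j : Fin M, T i j = t ((i : ℤ) - (j : ℤ)))
    (c : ZMod N → ℂ)
    (hc : ∀ s : ℤ, -((M : ℤ) - 1) ≤ s → s ≤ (M : ℤ) - 1 → c (s : ZMod N) = t s)
    (lam : ZMod N → ℂ)
    (hlam : ∀ j : ZMod N, lam j = ∑ s : ZMod N, c s * ζ ^ (-(((j * s).val : ℤ)))) :
    ∀ (p : Fin M → ℂ) (i : Fin M),
      T.mulVec p i =
        (N : ℂ)⁻¹ * ∑ j : ZMod N,
          ζ ^ (((((i : ℕ) : ZMod N) * j).val)) * lam j *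
            (∑ l : Fin M, ζ ^ (-(((j * ((l : ℕ) : ZMod N)).val : ℤ))) * p l) := by
  intro p i
  have hN0 : N ≠ 0 := NeZero.ne N
  have hNpos : 0 < N := Nat.pos_of_ne_zero hN0
  have hprim : IsPrimitiveRoot ζ N := hζ ▸ Complex.isPrimitiveRoot_exp N hN0
  have hζN : ζ ^ (N : ℤ) = 1 := by
    exact_mod_cast hprim.pow_eq_one
  have hcong : ∀ m m' : ℤ, (m : ZMod N) = (m' : ZMod N) → ζ ^ m = ζ ^ m' := by
    intro m m' h
    have hdvd : (N : ℤ) ∣ m - m' := by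
      rwa [← ZMod.intCast_zmod_eq_zero_iff_dvd, Int.cast_sub, sub_eq_zero]
    have : ζ ^ (m - m') = 1 := (hprim.zpow_eq_one_iff_dvd _).mpr hdvd
    have hz : ζ ≠ 0 := hprim.ne_zero hN0
    rw [zpow_sub₀ hz, div_eq_one_iff_eq (zpow_ne_zero m' hz)] at this
    exact this
  -- the character
  set e : ZMod N → ℂ := fun a => ζ ^ (a.val : ℤ) with he
  have hecast : ∀ m : ℤ, e ((m : ZMod N)) = ζ ^ m := by
    intro m
    apply hcong
    push_cast [ZMod.natCast_val, ZMod.intCast_zmod_cast]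
    simp [ZMod.intCast_cast]
  have heval : ∀ a : ZMod N, e a = ζ ^ (a.val : ℤ) := fun a => rfl
  have hecast' : ∀ a : ZMod N, ζ ^ (-(a.val : ℤ)) = e (-a) := by
    intro a
    have := hecast (-(a.val : ℤ))
    rw [← this]
    congr 1
    push_cast [ZMod.natCast_val]
    simp [ZMod.intCast_cast]
  -- sum of character over ZMod N
  have hsum : ∀ d : ZMod N, (∑ j : ZMod N, e (j * d)) = if d = 0 then (N : ℂ) else 0 := by
    intro d
    by_cases hd : d = 0
    · simp [hd, he, ZMod.val_zero, ZMod.card]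
    · rw [if_neg hd]
      have hterm : ∀ j : ZMod N, e (j * d) = (ζ ^ d.val) ^ j.val := by
        intro j
        rw [heval]
        have : ζ ^ ((j * d).val : ℤ) = ζ ^ ((j.val * d.val : ℕ) : ℤ) := by
          apply hcong
          push_cast [ZMod.natCast_val]
          ring
        rw [this, zpow_natCast, mul_comm, pow_mul]
      simp only [hterm]
      have hbij : (∑ j : ZMod N, (ζ ^ d.val) ^ j.val)
          = ∑ k ∈ Finset.range N, (ζ ^ d.val) ^ k := by
        refine Finset.sum_nbij' (fun j => j.val) (fun k => (k : ZMod N)) ?_ ?_ ?_ ?_ ?_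
        · intro a _; exact Finset.mem_range.mpr (ZMod.val_lt a)
        · intro a _; exact Finset.mem_univ _
        · intro a _; simp [ZMod.natCast_val, ZMod.cast_id]
        · intro a ha; exact ZMod.val_cast_of_lt (Finset.mem_range.mp ha)
        · intro a _; rfl
      rw [hbij]
      have hne1 : ζ ^ d.val ≠ 1 := by
        apply hprim.pow_ne_one_of_pos_of_lt
        · exact (fun h => hd ((ZMod.val_eq_zero d).mp h))
        · exact ZMod.val_lt d
      rw [geom_sum_eq hne1]
      rw [← pow_mul, mul_comm, pow_mul]
      have : ζ ^ N = 1 := hprim.pow_eq_one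
      rw [this, one_pow]
      simp
  -- multiplicativity
  have hemul : ∀ a b : ZMod N, e a * e b = e (a + b) := by
    intro a b
    have ha := (hecast (a.val : ℤ))
    have hb := (hecast (b.val : ℤ))
    have hab : e (a + b) = ζ ^ ((a.val : ℤ) + (b.val : ℤ)) := by
      have := hecast ((a.val : ℤ) + (b.val : ℤ))
      rw [← this]
      congr 1
      push_cast [ZMod.natCast_val]
      simp [ZMod.intCast_cast]
    rw [hab, zpow_add₀ (hprim.ne_zero hN0), heval a, heval b]
  -- rewrite the RHS
  calc T.mulVec p i
      = ∑ l : Fin M, t ((i : ℤ) - (l : ℤ)) * p l := by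
        simp [Matrix.mulVec, dotProduct, hT]
    _ = ∑ l : Fin M, c ((((i : ℕ) : ZMod N) - ((l : ℕ) : ZMod N))) * p l := by
        refine Finset.sum_congr rfl fun l _ => ?_
        congr 1
        have h1 : (((i : ℤ) - (l : ℤ) : ℤ) : ZMod N)
            = ((i : ℕ) : ZMod N) - ((l : ℕ) : ZMod N) := by push_cast; ring
        rw [← h1]
        refine (hc _ ?_ ?_).symm
        · have := i.isLt; have := l.isLt; omega
        · have := i.isLt; have := l.isLt; omega
    _ = (N : ℂ)⁻¹ * ∑ j : ZMod N,
          ζ ^ (((((i : ℕ) : ZMod N) * j).val)) * lam j *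
            (∑ l : Fin M, ζ ^ (-(((j * ((l : ℕ) : ZMod N)).val : ℤ))) * p l) := by
        simp only [hlam]
        have hrw : ∀ j : ZMod N,
            ζ ^ (((((i : ℕ) : ZMod N) * j).val)) *
              (∑ s : ZMod N, c s * ζ ^ (-(((j * s).val : ℤ)))) *
              (∑ l : Fin M, ζ ^ (-(((j * ((l : ℕ) : ZMod N)).val : ℤ))) * p l)
            = ∑ s : ZMod N, ∑ l : Fin M,
                c s * p l * e (j * (((i : ℕ) : ZMod N) - s - ((l : ℕ) : ZMod N))) := by
          intro j
          rw [Finset.sum_comm]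
          rw [Finset.mul_sum]
          refine Finset.sum_congr rfl fun l _ => ?_
          rw [Finset.mul_sum, Finset.sum_mul]
          refine Finset.sum_congr rfl fun s _ => ?_
          have h1 : ζ ^ (((((i : ℕ) : ZMod N) * j).val))
              = e (((i : ℕ) : ZMod N) * j) := by
            rw [heval, zpow_natCast]
          rw [h1, hecast' (j * s), hecast' (j * ((l : ℕ) : ZMod N))]
          have : e (((i : ℕ) : ZMod N) * j) * (e (-(j * s))) *
              (e (-(j * ((l : ℕ) : ZMod N))))
              = e (j * (((i : ℕ) : ZMod N) - s - ((l : ℕ) : ZMod N))) := by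
            rw [hemul, hemul]
            congr 1
            ring
          calc e (((i : ℕ) : ZMod N) * j) * (c s * e (-(j * s))) *
                (e (-(j * ((l : ℕ) : ZMod N))) * p l)
              = c s * p l * (e (((i : ℕ) : ZMod N) * j) * e (-(j * s)) *
                  e (-(j * ((l : ℕ) : ZMod N)))) := by ring
            _ = _ := by rw [this]
        simp only [hrw]
        rw [Finset.sum_comm]
        have : ∀ s : ZMod N, ∑ j : ZMod N, ∑ l : Fin M,
            c s * p l * e (j * (((i : ℕ) : ZMod N) - s - ((l : ℕ) : ZMod N))) =
            ∑ l : Fin M, c s * p l *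
              (if ((i : ℕ) : ZMod N) - s - ((l : ℕ) : ZMod N) = 0 then (N : ℂ) else 0) := by
          intro s
          rw [Finset.sum_comm]
          refine Finset.sum_congr rfl fun l _ => ?_
          rw [← Finset.mul_sum, hsum]
        simp only [this]
        rw [Finset.sum_comm]
        rw [Finset.mul_sum]
        refine Finset.sum_congr rfl fun l _ => ?_
        have hcond : ∀ s : ZMod N,
            (((i : ℕ) : ZMod N) - s - ((l : ℕ) : ZMod N) = 0) ↔
            (s = ((i : ℕ) : ZMod N) - ((l : ℕ) : ZMod N)) := by
          intro s; constructor <;> intro h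
          · linear_combination -h
          · rw [h]; ring
        simp only [hcond, mul_ite, mul_zero]
        rw [Finset.sum_ite_eq' Finset.univ]
        simp only [Finset.mem_univ, if_true]
        have hNne : (N : ℂ) ≠ 0 := Nat.cast_ne_zero.mpr hN0
        field_simp
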